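/- Let θ > 0 and let f : ℝ → ℝ be C¹ on [0,θ] with f'(x) < 0 for all x ∈ [0,θ] and f(0) > 0 > f(θ), and set Q_c := −f(θ). Then ∫₀^θ dx/(f(x)+A) tends to +∞ as A tends to Q_c from the right (i.e. Tendsto (fun A => ∫₀^θ dx/(f(x)+A)) (𝓝[>] Q_c) atTop). -/

import Mathlib

open Filter Set intervalIntegral Real

/-- value of the comparison integral -/
lemma aux_integral_val (θ M ε : ℝ) (hθ : 0 < θ) (hM : 0 < M) (hε : 0 < ε) :
    ∫ x in (0:ℝ)..θ, 1 / (M * (θ - x) + ε)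
      = (1 / M) * (Real.log (M * θ + ε) - Real.log ε) := by
  have key : ∀ x ∈ Set.uIcc (0:ℝ) θ,
      HasDerivAt (fun x => -(1 / M) * Real.log (M * (θ - x) + ε))
        (1 / (M * (θ - x) + ε)) x := by
    intro x hx
    rw [Set.uIcc_of_le hθ.le] at hx
    have hpos : 0 < M * (θ - x) + ε := by
      have : 0 ≤ θ - x := by linarith [hx.2]
      nlinarith
    have h1 : HasDerivAt (fun x : ℝ => M * (θ - x) + ε) (-M) x := by
      have : HasDerivAt (fun x : ℝ => M * (θ - x) + ε) (M * (0 - 1) + 0) x := by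
        exact (((hasDerivAt_const x θ).sub (hasDerivAt_id x)).const_mul M).add
          (hasDerivAt_const x ε)
      simpa using this
    have h2 : HasDerivAt (fun x => Real.log (M * (θ - x) + ε))
        ((M * (θ - x) + ε)⁻¹ * (-M)) x :=
      by have := (Real.hasDerivAt_log hpos.ne').comp x h1; exact this
    have h3 : HasDerivAt (fun x => -(1 / M) * Real.log (M * (θ - x) + ε))
        (-(1 / M) * ((M * (θ - x) + ε)⁻¹ * -M)) x := h2.const_mul (-(1 / M))
    convert h3 using 1
    field_simp
  rw [intervalIntegral.integral_eq_sub_of_hasDerivAt key]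
  · have hpos1 : 0 < M * (θ - θ) + ε := by nlinarith
    have hpos2 : 0 < M * (θ - 0) + ε := by nlinarith
    ring_nf
  · apply ContinuousOn.intervalIntegrable
    apply ContinuousOn.div continuousOn_const
    · fun_prop
    · intro x hx
      rw [Set.uIcc_of_le hθ.le] at hx
      have : 0 ≤ θ - x := by linarith [hx.2]
      nlinarith

theorem time_to_threshold_tendsto_atTop (θ : ℝ) (f f' : ℝ → ℝ)
    (hθ : 0 < θ)
    (hderiv : ∀ x ∈ Set.Icc 0 θ, HasDerivAt f (f' x) x)
    (hf'_cont : ContinuousOn f' (Set.Icc 0 θ))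
    (hf'_neg : ∀ x ∈ Set.Icc 0 θ, f' x < 0)
    (hf0 : 0 < f 0) (hfθ : f θ < 0) :
    Filter.Tendsto (fun A => ∫ x in (0:ℝ)..θ, 1 / (f x + A))
      (nhdsWithin (-f θ) (Set.Ioi (-f θ))) Filter.atTop := by
  set Q : ℝ := -f θ with hQ
  -- continuity of f on Icc
  have hfc : ContinuousOn f (Set.Icc 0 θ) := fun x hx =>
    (hderiv x hx).continuousAt.continuousWithinAt
  -- bound on f'
  obtain ⟨C, hC⟩ := (isCompact_Icc (a := (0:ℝ)) (b := θ)).exists_bound_of_continuousOn hf'_cont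
  set M : ℝ := max C 1 with hM
  have hMpos : 0 < M := lt_of_lt_of_le one_pos (le_max_right _ _)
  have hbound : ∀ x ∈ Set.Icc (0:ℝ) θ, ‖f' x‖ ≤ M :=
    fun x hx => le_trans (hC x hx) (le_max_left _ _)
  -- Lipschitz estimate: |f x - f θ| ≤ M (θ - x)
  have hlip : ∀ x ∈ Set.Icc (0:ℝ) θ, f x - f θ ≤ M * (θ - x) := by
    intro x hx
    have := (convex_Icc (0:ℝ) θ).norm_image_sub_le_of_norm_hasDerivWithin_le
      (fun y hy => (hderiv y hy).hasDerivWithinAt) hbound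
      hx (Set.right_mem_Icc.2 hθ.le)
    have habs : |f θ - f x| ≤ M * |θ - x| := by simpa [Real.norm_eq_abs] using this
    have h1 : f x - f θ ≤ |f θ - f x| := by
      rw [abs_sub_comm]; exact le_abs_self _
    have h2 : |θ - x| = θ - x := abs_of_nonneg (by linarith [hx.2])
    rw [h2] at habs
    linarith
  -- antitone: f x ≥ f θ on [0, θ]
  have hanti : StrictAntiOn f (Set.Icc 0 θ) := by
    apply strictAntiOn_of_deriv_neg (convex_Icc _ _) hfc
    intro x hx
    rw [interior_Icc] at hx
    have hx' : x ∈ Set.Icc (0:ℝ) θ := Set.mem_Icc.2 ⟨hx.1.le, hx.2.le⟩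
    rw [(hderiv x hx').deriv]
    exact hf'_neg x hx'
  have hge : ∀ x ∈ Set.Icc (0:ℝ) θ, f θ ≤ f x := by
    intro x hx
    rcases eq_or_lt_of_le hx.2 with h | h
    · rw [h]
    · exact (hanti hx (Set.right_mem_Icc.2 hθ.le) h).le
  -- lower bound function
  have hlow : ∀ A ∈ Set.Ioi Q,
      (1 / M) * (Real.log (M * θ + (A + f θ)) - Real.log (A + f θ))
        ≤ ∫ x in (0:ℝ)..θ, 1 / (f x + A) := by
    intro A hA
    have hε : 0 < A + f θ := by simp only [Set.mem_Ioi, hQ] at hA; linarith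
    rw [← aux_integral_val θ M (A + f θ) hθ hMpos hε]
    apply intervalIntegral.integral_mono_on hθ.le
    · apply ContinuousOn.intervalIntegrable
      apply ContinuousOn.div continuousOn_const
      · fun_prop
      · intro x hx
        rw [Set.uIcc_of_le hθ.le] at hx
        have : 0 ≤ θ - x := by linarith [hx.2]
        nlinarith
    · apply ContinuousOn.intervalIntegrable
      apply ContinuousOn.div continuousOn_const
      · rw [Set.uIcc_of_le hθ.le]; fun_prop
      · intro x hx
        rw [Set.uIcc_of_le hθ.le] at hx
        have := hge x hx
        exact ne_of_gt (by linarith)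
    · intro x hx
      have hpos : 0 < f x + A := by have := hge x hx; linarith
      have hle : f x + A ≤ M * (θ - x) + (A + f θ) := by
        have := hlip x hx; linarith
      exact one_div_le_one_div_of_le hpos hle
  -- the lower bound tends to atTop
  have hshift : Filter.Tendsto (fun A => A + f θ) (nhdsWithin Q (Set.Ioi Q))
      (nhdsWithin 0 (Set.Ioi 0)) := by
    apply tendsto_nhdsWithin_of_tendsto_nhds_of_eventually_within
    · have : Filter.Tendsto (fun A : ℝ => A + f θ) (nhds Q) (nhds (Q + f θ)) :=
        (continuous_id.add continuous_const).tendsto Q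
      have h := this.mono_left (nhdsWithin_le_nhds (s := Set.Ioi Q))
      simpa [hQ] using h
    · filter_upwards [self_mem_nhdsWithin] with A hA
      simp only [Set.mem_Ioi, hQ] at hA ⊢
      linarith
  have hlog1 : Filter.Tendsto (fun A => Real.log (A + f θ))
      (nhdsWithin Q (Set.Ioi Q)) Filter.atBot :=
    Real.tendsto_log_nhdsGT_zero.comp hshift
  have hlog2 : Filter.Tendsto (fun A => Real.log (M * θ + (A + f θ)))
      (nhdsWithin Q (Set.Ioi Q)) (nhds (Real.log (M * θ))) := by
    have h1 : Filter.Tendsto (fun A => M * θ + (A + f θ))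
        (nhdsWithin Q (Set.Ioi Q)) (nhds (M * θ)) := by
      have hc : ContinuousAt (fun A : ℝ => M * θ + (A + f θ)) Q := by fun_prop
      have h := hc.tendsto.mono_left (nhdsWithin_le_nhds (s := Set.Ioi Q))
      simpa [hQ] using h
    exact ((Real.continuousAt_log (by positivity)).tendsto.comp h1)
  have hLB : Filter.Tendsto
      (fun A => (1 / M) * (Real.log (M * θ + (A + f θ)) - Real.log (A + f θ)))
      (nhdsWithin Q (Set.Ioi Q)) Filter.atTop := by
    apply Filter.Tendsto.const_mul_atTop (by positivity : (0:ℝ) < 1 / M)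
    have := Filter.Tendsto.add_atTop hlog2 (Filter.tendsto_neg_atBot_atTop.comp hlog1)
    simpa [sub_eq_add_neg] using this
  apply Filter.tendsto_atTop_mono' _ _ hLB
  filter_upwards [self_mem_nhdsWithin] with A hA
  exact hlow A hA
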